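/- Let q be a prime power and n ≥ 2. If X is a set of points of PG(n,q) such that no four points of X are coplanar (a 4-general set), then |X| ≤ (√(8q^{n+1} + q² − 6q + 1) + q − 3) / (2(q−1)). -/

import Mathlib

open Projectivization

private lemma aux_pair_indep {F V : Type*} [Field F] [AddCommGroup V] [Module F V]
    {a b : Projectivization F V} (h : a ≠ b) :
    LinearIndependent F ![a.rep, b.rep] := by
  have h2 := Projectivization.independent_iff.mp
    ((Projectivization.independent_pair_iff_ne a b).mpr h)
  have : Projectivization.rep ∘ ![a, b] = ![a.rep, b.rep] := by
    funext i; fin_cases i <;> rfl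
  rwa [this] at h2

private lemma aux_tri_of_quad {F V : Type*} [Field F] [AddCommGroup V] [Module F V]
    {v0 v1 v2 v3 : V} (h : LinearIndependent F ![v0, v1, v2, v3]) :
    LinearIndependent F ![v0, v1, v2] := by
  have h2 := h.comp Fin.castSucc (Fin.castSucc_injective 3)
  have : (![v0, v1, v2, v3] ∘ Fin.castSucc) = ![v0, v1, v2] := by
    funext i; fin_cases i <;> rfl
  rwa [this] at h2

private lemma aux_dep2 {F V : Type*} [Field F] [AddCommGroup V] [Module F V]
    {v0 v1 : V} (h : LinearIndependent F ![v0, v1]) {c0 c1 : F}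
    (hc : c0 • v0 + c1 • v1 = 0) : c0 = 0 ∧ c1 = 0 := by
  have := Fintype.linearIndependent_iff.mp h ![c0, c1] (by
    simpa [Fin.sum_univ_two] using hc)
  exact ⟨this 0, this 1⟩

private lemma aux_dep3 {F V : Type*} [Field F] [AddCommGroup V] [Module F V]
    {v0 v1 v2 : V} (h : LinearIndependent F ![v0, v1, v2]) {c0 c1 c2 : F}
    (hc : c0 • v0 + c1 • v1 + c2 • v2 = 0) : c0 = 0 ∧ c1 = 0 ∧ c2 = 0 := by
  have := Fintype.linearIndependent_iff.mp h ![c0, c1, c2] (by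
    simpa [Fin.sum_univ_three, add_assoc] using hc)
  exact ⟨this 0, this 1, this 2⟩

private lemma aux_dep4 {F V : Type*} [Field F] [AddCommGroup V] [Module F V]
    {v0 v1 v2 v3 : V} (h : LinearIndependent F ![v0, v1, v2, v3]) {c0 c1 c2 c3 : F}
    (hc : c0 • v0 + c1 • v1 + c2 • v2 + c3 • v3 = 0) :
    c0 = 0 ∧ c1 = 0 ∧ c2 = 0 ∧ c3 = 0 := by
  have := Fintype.linearIndependent_iff.mp h ![c0, c1, c2, c3] (by
    simpa [Fin.sum_univ_four, add_assoc] using hc)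
  exact ⟨this 0, this 1, this 2, this 3⟩

private lemma aux_count (q n : ℕ) (F : Type) [Field F] [Fintype F]
    (hq : Fintype.card F = q)
    (X : Finset (Projectivization F (Fin (n + 1) → F)))
    (h4 : ∀ a ∈ X, ∀ b ∈ X, ∀ c ∈ X, ∀ d ∈ X,
      a ≠ b → a ≠ c → a ≠ d → b ≠ c → b ≠ d → c ≠ d →
      LinearIndependent F ![a.rep, b.rep, c.rep, d.rep])
    (hX4 : 4 ≤ X.card) :
    X.card * (X.card - 1) * ((q - 1) * (q - 1)) + 2 * (X.card * (q - 1))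
      ≤ 2 * (q ^ (n + 1) - 1) := by
  classical
  letI : LinearOrder (Projectivization F (Fin (n + 1) → F)) :=
    IsWellOrder.linearOrder WellOrderingRel
  -- three distinct points of X are independent
  have key3 : ∀ x ∈ X, ∀ y ∈ X, ∀ z ∈ X, x ≠ y → x ≠ z → y ≠ z →
      LinearIndependent F ![x.rep, y.rep, z.rep] := by
    intro x hx y hy z hz hxy hxz hyz
    have hcard : 0 < (X \ {x, y, z}).card := by
      have h1 : ({x, y, z} : Finset (Projectivization F (Fin (n + 1) → F))).card ≤ 3 := by
        have a1 := Finset.card_insert_le x ({y, z} : Finset (Projectivization F (Fin (n + 1) → F)))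
        have a2 := Finset.card_insert_le y ({z} : Finset (Projectivization F (Fin (n + 1) → F)))
        have a3 : ({z} : Finset (Projectivization F (Fin (n + 1) → F))).card = 1 := Finset.card_singleton z
        omega
      have h2 := Finset.le_card_sdiff ({x, y, z} : Finset (Projectivization F (Fin (n + 1) → F))) X
      omega
    obtain ⟨w, hw⟩ := Finset.card_pos.mp hcard
    rw [Finset.mem_sdiff] at hw
    obtain ⟨hwX, hwne⟩ := hw
    simp only [Finset.mem_insert, Finset.mem_singleton, not_or] at hwne
    exact aux_tri_of_quad (h4 x hx y hy z hz w hwX hxy hxz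
      (fun h => hwne.1 h.symm) hyz (fun h => hwne.2.1 h.symm) (fun h => hwne.2.2 h.symm))
  have key3' : ∀ x ∈ X, ∀ y ∈ X, ∀ z ∈ X, x ≠ y → x ≠ z → y ≠ z →
      ∀ c0 c1 c2 : F, c0 • x.rep + c1 • y.rep + c2 • z.rep = 0 →
      c0 = 0 ∧ c1 = 0 ∧ c2 = 0 := fun x hx y hy z hz hxy hxz hyz c0 c1 c2 hc =>
    aux_dep3 (key3 x hx y hy z hz hxy hxz hyz) hc
  -- the pairs
  set pairs : Finset (Projectivization F (Fin (n + 1) → F) × Projectivization F (Fin (n + 1) → F)) := X.offDiag.filter (fun p => p.1 < p.2) with hpairsdef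
  have hpairs : 2 * pairs.card = X.card * (X.card - 1) := by
    have hsw : (X.offDiag.filter (fun p => p.2 < p.1)).card = pairs.card := by
      refine Finset.card_bij' (fun p _ => (p.2, p.1)) (fun p _ => (p.2, p.1)) ?_ ?_ ?_ ?_ <;>
          intro p hp <;>
        first
          | (simp only [hpairsdef, Finset.mem_filter, Finset.mem_offDiag] at hp ⊢; tauto)
          | simp
    have hsplit := Finset.card_filter_add_card_filter_not
      (s := X.offDiag) (fun p => p.1 < p.2)
    have hnegeq : X.offDiag.filter (fun p => ¬ p.1 < p.2)
        = X.offDiag.filter (fun p => p.2 < p.1) := by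
      apply Finset.filter_congr
      intro p hp
      rw [Finset.mem_offDiag] at hp
      simp only [not_lt, eq_iff_iff]
      constructor
      · intro h; exact lt_of_le_of_ne h (fun he => hp.2.2 he.symm)
      · intro h; exact le_of_lt h
    rw [hnegeq, hsw, Finset.offDiag_card] at hsplit
    rw [← hpairsdef] at hsplit
    have : X.card * (X.card - 1) = X.card * X.card - X.card := by
      rw [Nat.mul_sub, mul_one]
    omega
  -- the sets
  set U : Finset F := Finset.univ.erase 0 with hUdef
  have hU : U.card = q - 1 := by
    rw [hUdef, Finset.card_erase_of_mem (Finset.mem_univ _), Finset.card_univ, hq]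
  set φ : (Projectivization F (Fin (n + 1) → F) × Projectivization F (Fin (n + 1) → F)) × F × F → (Fin (n + 1) → F) :=
    fun x => x.2.2 • (x.1.1.rep + x.2.1 • x.1.2.rep) with hφdef
  set ψ : Projectivization F (Fin (n + 1) → F) × F → (Fin (n + 1) → F) := fun x => x.2 • x.1.rep with hψdef
  set A : Finset ((Projectivization F (Fin (n + 1) → F) × Projectivization F (Fin (n + 1) → F)) × F × F) := pairs ×ˢ U ×ˢ U with hAdef
  set B : Finset (Projectivization F (Fin (n + 1) → F) × F) := X ×ˢ U with hBdef
  -- membership unpacking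
  have hmemA : ∀ x ∈ A, x.1.1 ∈ X ∧ x.1.2 ∈ X ∧ x.1.1 < x.1.2 ∧ x.2.1 ≠ 0 ∧ x.2.2 ≠ 0 := by
    intro x hx
    simp only [hAdef, hpairsdef, hUdef, Finset.mem_product, Finset.mem_filter,
      Finset.mem_offDiag, Finset.mem_erase, Finset.mem_univ, and_true] at hx
    tauto
  -- injectivity of φ on A
  have hφinj : Set.InjOn φ A := by
    rintro ⟨⟨a, b⟩, t, u⟩ hp ⟨⟨c, d⟩, s, u'⟩ hp' heq
    obtain ⟨haX, hbX, hab, ht, hu⟩ := hmemA _ hp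
    obtain ⟨hcX, hdX, hcd, hs, hu'⟩ := hmemA _ hp'
    simp only at haX hbX hab ht hu hcX hdX hcd hs hu'
    simp only [hφdef] at heq
    have habne : a ≠ b := ne_of_lt hab
    have hcdne : c ≠ d := ne_of_lt hcd
    by_cases hac : a = c
    · subst hac
      by_cases hbd : b = d
      · subst hbd
        have h0 : (u - u') • a.rep + (u * t - u' * s) • b.rep = 0 := by
          linear_combination (norm := module) heq
        obtain ⟨h1, h2⟩ := aux_dep2 (aux_pair_indep habne) h0
        have hu1 : u = u' := sub_eq_zero.mp h1
        have h2' := sub_eq_zero.mp h2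
        rw [hu1] at h2'
        have ht1 : t = s := mul_left_cancel₀ hu' h2'
        rw [hu1, ht1]
      · -- a = c, b ≠ d : points a b d distinct
        exfalso
        have h0 : (u - u') • a.rep + (u * t) • b.rep + (-(u' * s)) • d.rep = 0 := by
          linear_combination (norm := module) heq
        have := key3' a haX b hbX d hdX habne hcdne hbd _ _ _ h0
        exact ht (by
          have := this.2.1
          rcases mul_eq_zero.mp this with h | h
          · exact absurd h hu
          · exact h)
    · by_cases had : a = d
      · subst had
        exfalso
        have hbc : b ≠ c := by
          intro h; subst h
          exact absurd (lt_trans hab hcd) (lt_irrefl a)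
        have h0 : (u - u' * s) • a.rep + (u * t) • b.rep + (-u') • c.rep = 0 := by
          linear_combination (norm := module) heq
        have := key3' a haX b hbX c hcX habne (Ne.symm hcdne) hbc _ _ _ h0
        exact hu' (neg_eq_zero.mp this.2.2)
      · by_cases hbc : b = c
        · subst hbc
          exfalso
          have hbd : b ≠ d := ne_of_lt hcd
          have h0 : u • a.rep + (u * t - u') • b.rep + (-(u' * s)) • d.rep = 0 := by
            linear_combination (norm := module) heq
          have := key3' a haX b hbX d hdX habne had hbd _ _ _ h0
          exact hu this.1
        · by_cases hbd : b = d
          · subst hbd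
            exfalso
            have h0 : u • a.rep + (u * t - u' * s) • b.rep + (-u') • c.rep = 0 := by
              linear_combination (norm := module) heq
            have := key3' a haX b hbX c hcX habne hac (Ne.symm hcdne) _ _ _ h0
            exact hu this.1
          · exfalso
            have h0 : u • a.rep + (u * t) • b.rep + (-u') • c.rep + (-(u' * s)) • d.rep = 0 := by
              linear_combination (norm := module) heq
            have := aux_dep4 (h4 a haX b hbX c hcX d hdX habne hac had hbc hbd hcdne) h0
            exact hu this.1
  -- injectivity of ψ on B
  have hψinj : Set.InjOn ψ B := by
    rintro ⟨x, u⟩ hp ⟨y, u'⟩ hp' heq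
    simp only [hBdef, hUdef, Finset.coe_product, Set.mem_prod, Finset.mem_coe,
      Finset.mem_erase, Finset.mem_univ, and_true] at hp hp'
    simp only [hψdef] at heq
    by_cases hxy : x = y
    · subst hxy
      have h0 : (u - u') • x.rep = 0 := by linear_combination (norm := module) heq
      rcases smul_eq_zero.mp h0 with h | h
      · simp [sub_eq_zero.mp h]
      · exact absurd h (Projectivization.rep_nonzero x)
    · exfalso
      have h0 : u • x.rep + (-u') • y.rep = 0 := by
        linear_combination (norm := module) heq
      exact hp.2 (aux_dep2 (aux_pair_indep hxy) h0).1
  -- images are disjoint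
  have hdisj : Disjoint (A.image φ) (B.image ψ) := by
    rw [Finset.disjoint_left]
    rintro v hv hv'
    obtain ⟨⟨⟨a, b⟩, t, u⟩, hp, rfl⟩ := Finset.mem_image.mp hv
    obtain ⟨⟨x, u'⟩, hp', heq⟩ := Finset.mem_image.mp hv'
    obtain ⟨haX, hbX, hab, ht, hu⟩ := hmemA _ hp
    simp only at haX hbX hab ht hu
    simp only [hBdef, hUdef, Finset.mem_product, Finset.mem_erase, Finset.mem_univ,
      and_true] at hp'
    obtain ⟨hxX, hu'⟩ := hp'
    simp only [hφdef, hψdef] at heq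
    have habne : a ≠ b := ne_of_lt hab
    by_cases hxa : x = a
    · subst hxa
      have h0 : (u - u') • x.rep + (u * t) • b.rep = 0 := by
        linear_combination (norm := module) heq.symm
      have := (aux_dep2 (aux_pair_indep habne) h0).2
      rcases mul_eq_zero.mp this with h | h
      · exact hu h
      · exact ht h
    · by_cases hxb : x = b
      · subst hxb
        have h0 : u • a.rep + (u * t - u') • x.rep = 0 := by
          linear_combination (norm := module) heq.symm
        exact hu (aux_dep2 (aux_pair_indep habne) h0).1
      · have h0 : u • a.rep + (u * t) • b.rep + (-u') • x.rep = 0 := by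
          linear_combination (norm := module) heq.symm
        exact hu (key3' a haX b hbX x hxX habne (Ne.symm hxa) (Ne.symm hxb) _ _ _ h0).1
  -- images avoid zero
  have hsub : A.image φ ∪ B.image ψ ⊆ Finset.univ.erase (0 : Fin (n + 1) → F) := by
    intro v hv
    rw [Finset.mem_erase]
    refine ⟨?_, Finset.mem_univ _⟩
    rcases Finset.mem_union.mp hv with hv | hv
    · obtain ⟨⟨⟨a, b⟩, t, u⟩, hp, rfl⟩ := Finset.mem_image.mp hv
      obtain ⟨haX, hbX, hab, ht, hu⟩ := hmemA _ hp
      simp only at haX hbX hab ht hu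
      intro h0
      simp only [hφdef] at h0
      have h1 : u • a.rep + (u * t) • b.rep = 0 := by
        linear_combination (norm := module) h0
      exact hu (aux_dep2 (aux_pair_indep (ne_of_lt hab)) h1).1
    · obtain ⟨⟨x, u⟩, hp, rfl⟩ := Finset.mem_image.mp hv
      simp only [hBdef, hUdef, Finset.mem_product, Finset.mem_erase, Finset.mem_univ,
        and_true] at hp
      intro h0
      simp only [hψdef] at h0
      rcases smul_eq_zero.mp h0 with h | h
      · exact hp.2 h
      · exact Projectivization.rep_nonzero x h
  -- counting
  have hcount : A.card + B.card ≤ q ^ (n + 1) - 1 := by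
    have h1 : (A.image φ ∪ B.image ψ).card = A.card + B.card := by
      rw [Finset.card_union_of_disjoint hdisj, Finset.card_image_of_injOn hφinj,
        Finset.card_image_of_injOn hψinj]
    have h2 := Finset.card_le_card hsub
    rw [h1] at h2
    have h3 : (Finset.univ.erase (0 : Fin (n + 1) → F)).card = q ^ (n + 1) - 1 := by
      rw [Finset.card_erase_of_mem (Finset.mem_univ _), Finset.card_univ]
      simp [hq]
    omega
  have hAcard : A.card = pairs.card * ((q - 1) * (q - 1)) := by
    simp [hAdef, Finset.card_product, hU]
  have hBcard : B.card = X.card * (q - 1) := by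
    simp [hBdef, Finset.card_product, hU]
  have hfinal : X.card * (X.card - 1) * ((q - 1) * (q - 1)) + 2 * (X.card * (q - 1))
      = 2 * (A.card + B.card) := by
    rw [hAcard, hBcard, ← hpairs]; ring
  rw [hfinal]
  omega

/-- upper bound on the size of a 4-general set in PG(n,q). -/
theorem stmt0 (q n : ℕ) (hn : 2 ≤ n) (F : Type) [Field F] [Fintype F]
    (hq : Fintype.card F = q)
    (X : Finset (Projectivization F (Fin (n + 1) → F)))
    (h4 : ∀ a ∈ X, ∀ b ∈ X, ∀ c ∈ X, ∀ d ∈ X,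
      a ≠ b → a ≠ c → a ≠ d → b ≠ c → b ≠ d → c ≠ d →
      LinearIndependent F ![a.rep, b.rep, c.rep, d.rep]) :
    (X.card : ℝ) ≤
      (Real.sqrt (8 * (q : ℝ) ^ (n + 1) + q ^ 2 - 6 * q + 1) + q - 3) / (2 * ((q : ℝ) - 1)) := by
  classical
  have hq2 : 2 ≤ q := by rw [← hq]; exact Fintype.one_lt_card
  have hQ : (2 : ℝ) ≤ (q : ℝ) := by exact_mod_cast hq2
  have hpow3 : ((q : ℝ)) ^ 3 ≤ (q : ℝ) ^ (n + 1) :=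
    pow_le_pow_right₀ (by linarith) (by omega)
  set D : ℝ := 8 * (q : ℝ) ^ (n + 1) + (q : ℝ) ^ 2 - 6 * (q : ℝ) + 1 with hDdef
  have hq10 : (0 : ℝ) ≤ (q : ℝ) - 1 := by linarith
  have hD53 : (5 * (q : ℝ) - 3) ^ 2 ≤ D := by
    nlinarith [hpow3, mul_nonneg (mul_nonneg hq10 hq10) hq10]
  have hsq : 5 * (q : ℝ) - 3 ≤ Real.sqrt D :=
    le_trans (le_abs_self _) (Real.abs_le_sqrt hD53)
  have hRHS3 : (3 : ℝ) ≤ (Real.sqrt D + (q : ℝ) - 3) / (2 * ((q : ℝ) - 1)) := by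
    rw [le_div_iff₀ (by linarith)]
    linarith
  by_cases hk : X.card ≤ 3
  · exact le_trans (by exact_mod_cast hk) hRHS3
  · push_neg at hk
    have hX4 : 4 ≤ X.card := hk
    have hcount := aux_count q n F hq X h4 hX4
    have hk1 : 1 ≤ X.card := by omega
    have hq1 : 1 ≤ q := by omega
    have hqp : 1 ≤ q ^ (n + 1) := Nat.one_le_pow _ _ (by omega)
    have hcR : (X.card : ℝ) * ((X.card : ℝ) - 1) * (((q : ℝ) - 1) * ((q : ℝ) - 1))
        + 2 * ((X.card : ℝ) * ((q : ℝ) - 1)) ≤ 2 * ((q : ℝ) ^ (n + 1) - 1) := by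
      have h1 : ((X.card * (X.card - 1) * ((q - 1) * (q - 1)) + 2 * (X.card * (q - 1)) : ℕ) : ℝ)
          ≤ ((2 * (q ^ (n + 1) - 1) : ℕ) : ℝ) := by exact_mod_cast hcount
      push_cast [Nat.cast_sub hk1, Nat.cast_sub hq1, Nat.cast_sub hqp] at h1
      nlinarith [h1]
    set K := (X.card : ℝ) with hKdef
    have hK0 : (0 : ℝ) ≤ K := Nat.cast_nonneg _
    have h2 : (2 * (((q : ℝ) - 1) * K) + 3 - (q : ℝ)) ^ 2 ≤ D := by nlinarith [hcR]
    have h3 : 2 * (((q : ℝ) - 1) * K) + 3 - (q : ℝ) ≤ Real.sqrt D :=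
      le_trans (le_abs_self _) (Real.abs_le_sqrt h2)
    rw [le_div_iff₀ (by linarith)]
    linarith
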